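/- Let A₁ ∈ ℝ^{m₁×n₁}, A₂ ∈ ℝ^{m₂×n₂}, B ∈ ℝ^{p×n₁}. Then rank of the block matrix [A₁⊗A₂ ; B⊗I_{n₂}] equals rank(A₂)·(rank([A₁; B]) − rank(B)) + n₂·rank(B). -/

import Mathlib

open Matrix Kronecker

open LinearMap Submodule Module

lemma finrank_range_conj {R : Type*} [Field R]
    {M N M' N' : Type*} [AddCommGroup M] [AddCommGroup N] [AddCommGroup M'] [AddCommGroup N']
    [Module R M] [Module R N] [Module R M'] [Module R N']
    (f : M →ₗ[R] N) (g : M' →ₗ[R] N') (e₁ : M ≃ₗ[R] M') (e₂ : N ≃ₗ[R] N')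
    (h : ∀ x, g (e₁ x) = e₂ (f x)) :
    finrank R (LinearMap.range f) = finrank R (LinearMap.range g) := by
  have hg : g = e₂.toLinearMap ∘ₗ (f ∘ₗ e₁.symm.toLinearMap) := by
    ext x
    simpa using h (e₁.symm x)
  rw [hg, LinearMap.range_comp,
    LinearMap.range_comp_of_range_eq_top f (LinearEquiv.range e₁.symm)]
  exact (LinearEquiv.finrank_map_eq e₂ _).symm

set_option maxHeartbeats 2000000 in
lemma core_rank {V Y W₁ W₂ W₃ : Type*}
    [AddCommGroup V] [AddCommGroup Y] [AddCommGroup W₁] [AddCommGroup W₂] [AddCommGroup W₃]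
    [Module ℝ V] [Module ℝ Y] [Module ℝ W₁] [Module ℝ W₂] [Module ℝ W₃]
    [FiniteDimensional ℝ V] [FiniteDimensional ℝ Y] [FiniteDimensional ℝ W₁]
    [FiniteDimensional ℝ W₂] [FiniteDimensional ℝ W₃]
    (a : V →ₗ[ℝ] W₁) (b : V →ₗ[ℝ] W₂) (c : W₃ →ₗ[ℝ] Y) :
    finrank ℝ (LinearMap.range
        ((((LinearMap.llcomp ℝ W₃ V W₁ a).comp (LinearMap.lcomp ℝ V c)).prod
          (LinearMap.llcomp ℝ Y V W₂ b))))
      + finrank ℝ Y * finrank ℝ (LinearMap.ker b)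
    = finrank ℝ Y * finrank ℝ V
      + finrank ℝ (LinearMap.range c)
          * (finrank ℝ (LinearMap.ker b) - finrank ℝ ↥(LinearMap.ker a ⊓ LinearMap.ker b)) := by
  classical
  set Φ := (((LinearMap.llcomp ℝ W₃ V W₁ a).comp (LinearMap.lcomp ℝ V c)).prod
      (LinearMap.llcomp ℝ Y V W₂ b)) with hΦ
  set Wb := LinearMap.ker b with hWb
  set Z : Submodule ℝ ↥Wb := Submodule.comap Wb.subtype (LinearMap.ker a) with hZ
  set Rc := LinearMap.range c with hRc
  set T : (Y →ₗ[ℝ] ↥Wb) →ₗ[ℝ] (↥Rc →ₗ[ℝ] (↥Wb ⧸ Z)) :=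
    (LinearMap.llcomp ℝ (↥Rc) (↥Wb) (↥Wb ⧸ Z) Z.mkQ).comp
      (LinearMap.lcomp ℝ (↥Wb) Rc.subtype) with hT
  -- T is surjective
  have hTsurj : LinearMap.range T = ⊤ := by
    obtain ⟨π, hπ⟩ := LinearMap.exists_leftInverse_of_injective Rc.subtype (Submodule.ker_subtype _)
    obtain ⟨σ, hσ⟩ := Z.mkQ.exists_rightInverse_of_surjective (Submodule.range_mkQ _)
    rw [LinearMap.range_eq_top]
    intro ψ
    refine ⟨σ ∘ₗ (ψ ∘ₗ π), ?_⟩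
    ext r
    have h1 : π r.1 = r := LinearMap.congr_fun hπ r
    have h2 : Z.mkQ (σ (ψ r)) = ψ r := LinearMap.congr_fun hσ (ψ r)
    simp [hT, LinearMap.llcomp_apply, LinearMap.lcomp_apply, h1, h2]
  -- J embeds Hom(Y, Wb) into Hom(Y, V)
  set J : (Y →ₗ[ℝ] ↥Wb) →ₗ[ℝ] (Y →ₗ[ℝ] V) := LinearMap.llcomp ℝ Y (↥Wb) V Wb.subtype with hJ
  have hJinj : Function.Injective J := by
    intro φ φ' hφ
    ext y
    have : Wb.subtype (φ y) = Wb.subtype (φ' y) := by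
      simpa [hJ] using LinearMap.congr_fun hφ y
    exact this
  -- map J (ker T) = ker Φ
  have hmap : Submodule.map J (LinearMap.ker T) = LinearMap.ker Φ := by
    apply le_antisymm
    · rintro _ ⟨φ, hφ, rfl⟩
      have hφ0 : T φ = 0 := hφ
      have hφ' : ∀ r : ↥Rc, φ r.1 ∈ Z := by
        intro r
        have := LinearMap.congr_fun hφ0 r
        simp only [hT, LinearMap.comp_apply, LinearMap.lcomp_apply, LinearMap.llcomp_apply,
          LinearMap.zero_apply, Submodule.mkQ_apply, Submodule.Quotient.mk_eq_zero] at this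
        exact this
      rw [LinearMap.mem_ker]
      refine Prod.ext ?_ ?_
      · ext w
        have hc : c w ∈ Rc := LinearMap.mem_range_self c w
        have ha : Wb.subtype (φ (c w)) ∈ LinearMap.ker a :=
          Submodule.mem_comap.mp (hφ' ⟨c w, hc⟩)
        simpa [hΦ, hJ, LinearMap.llcomp_apply, LinearMap.lcomp_apply] using ha
      · ext y
        simpa [hΦ, hJ, LinearMap.llcomp_apply] using (φ y).2
    · intro ψ hψ
      rw [LinearMap.mem_ker] at hψ
      have hψ1 : ∀ w, a (ψ (c w)) = 0 := by
        intro w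
        have := congrArg Prod.fst hψ
        simpa [hΦ, LinearMap.llcomp_apply, LinearMap.lcomp_apply] using LinearMap.congr_fun this w
      have hψ2 : ∀ y, b (ψ y) = 0 := by
        intro y
        have := congrArg Prod.snd hψ
        simpa [hΦ, LinearMap.llcomp_apply] using LinearMap.congr_fun this y
      refine ⟨LinearMap.codRestrict Wb ψ (fun y => LinearMap.mem_ker.mpr (hψ2 y)), ?_, ?_⟩
      · show _ ∈ LinearMap.ker T
        rw [LinearMap.mem_ker]
        ext r
        obtain ⟨w, hw⟩ := r.2
        have hker : ψ r.1 ∈ LinearMap.ker a := by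
          rw [LinearMap.mem_ker, ← hw]
          exact hψ1 w
        simp only [hT, LinearMap.comp_apply, LinearMap.lcomp_apply, LinearMap.llcomp_apply,
          LinearMap.zero_apply, Submodule.mkQ_apply, Submodule.Quotient.mk_eq_zero]
        exact Submodule.mem_comap.mpr hker
      · ext y; simp [hJ, LinearMap.llcomp_apply]
  -- dimension bookkeeping
  have e1 : finrank ℝ (LinearMap.range Φ) + finrank ℝ (LinearMap.ker Φ)
      = finrank ℝ Y * finrank ℝ V := by
    rw [← Module.finrank_linearMap]
    exact LinearMap.finrank_range_add_finrank_ker Φ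
  have e2 : finrank ℝ (LinearMap.ker Φ) = finrank ℝ (LinearMap.ker T) := by
    rw [← hmap]
    exact ((Submodule.equivMapOfInjective J hJinj _).finrank_eq).symm
  have e3 : finrank ℝ (LinearMap.range T) + finrank ℝ (LinearMap.ker T)
      = finrank ℝ Y * finrank ℝ ↥Wb := by
    rw [← Module.finrank_linearMap]
    exact LinearMap.finrank_range_add_finrank_ker T
  have e4 : finrank ℝ (LinearMap.range T) = finrank ℝ ↥Rc * finrank ℝ (↥Wb ⧸ Z) := by
    rw [hTsurj, finrank_top, Module.finrank_linearMap]
  have e5 : finrank ℝ (↥Wb ⧸ Z) + finrank ℝ Z = finrank ℝ ↥Wb :=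
    Submodule.finrank_quotient_add_finrank Z
  have e6 : finrank ℝ Z = finrank ℝ (LinearMap.ker a ⊓ Wb : Submodule ℝ V) := by
    rw [inf_comm, ← Submodule.map_comap_subtype Wb (LinearMap.ker a)]
    exact (Submodule.finrank_map_subtype_eq Wb Z).symm
  have hsub : finrank ℝ ↥Wb - finrank ℝ (LinearMap.ker a ⊓ Wb : Submodule ℝ V)
      = finrank ℝ (↥Wb ⧸ Z) := by omega
  rw [hsub]
  linarith [e1, e2, e3, e4]


lemma kron_mulVec_entry {m₁ n₁ m₂ n₂ : ℕ} (A : Matrix (Fin m₁) (Fin n₁) ℝ)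
    (C : Matrix (Fin m₂) (Fin n₂) ℝ) (x : Fin n₁ × Fin n₂ → ℝ) (i : Fin m₁) (i' : Fin m₂) :
    ((A ⊗ₖ C) *ᵥ x) (i, i') = (A * Matrix.of (fun k k' => x (k, k')) * Cᵀ) i i' := by
  simp only [Matrix.mulVec, dotProduct, Matrix.mul_apply, Matrix.kroneckerMap_apply,
    Matrix.transpose_apply, Matrix.of_apply, Finset.sum_mul, Finset.mul_sum,
    Fintype.sum_prod_type]
  rw [Finset.sum_comm]
  exact Finset.sum_congr rfl fun k _ => Finset.sum_congr rfl fun k' _ => by ring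

lemma kronOne_mulVec_entry {p n₁ n₂ : ℕ} (B : Matrix (Fin p) (Fin n₁) ℝ)
    (x : Fin n₁ × Fin n₂ → ℝ) (i : Fin p) (j : Fin n₂) :
    ((B ⊗ₖ (1 : Matrix (Fin n₂) (Fin n₂) ℝ)) *ᵥ x) (i, j)
      = (B * Matrix.of (fun k k' => x (k, k'))) i j := by
  simp only [Matrix.mulVec, dotProduct, Matrix.mul_apply, Matrix.kroneckerMap_apply,
    Matrix.of_apply, Fintype.sum_prod_type, Matrix.one_apply, mul_ite, ite_mul, mul_one, one_mul,
    mul_zero, zero_mul, Finset.sum_ite_eq, Finset.mem_univ, if_true]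

theorem rank_stacked_kronecker_general (m₁ n₁ m₂ n₂ p : ℕ)
    (A₁ : Matrix (Fin m₁) (Fin n₁) ℝ) (A₂ : Matrix (Fin m₂) (Fin n₂) ℝ)
    (B : Matrix (Fin p) (Fin n₁) ℝ) :
    (Matrix.fromRows (A₁ ⊗ₖ A₂) (B ⊗ₖ (1 : Matrix (Fin n₂) (Fin n₂) ℝ))).rank
      = A₂.rank * ((Matrix.fromRows A₁ B).rank - B.rank) + n₂ * B.rank := by
  classical
  set a : (Fin n₁ → ℝ) →ₗ[ℝ] (Fin m₁ → ℝ) := Matrix.mulVecLin A₁ with ha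
  set b : (Fin n₁ → ℝ) →ₗ[ℝ] (Fin p → ℝ) := Matrix.mulVecLin B with hb
  set c : (Fin m₂ → ℝ) →ₗ[ℝ] (Fin n₂ → ℝ) := Matrix.mulVecLin A₂ᵀ with hc
  set Φ := (((LinearMap.llcomp ℝ (Fin m₂ → ℝ) (Fin n₁ → ℝ) (Fin m₁ → ℝ) a).comp
      (LinearMap.lcomp ℝ (Fin n₁ → ℝ) c)).prod
      (LinearMap.llcomp ℝ (Fin n₂ → ℝ) (Fin n₁ → ℝ) (Fin p → ℝ) b)) with hΦ
  -- equivalences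
  set e₁ : (Fin n₁ × Fin n₂ → ℝ) ≃ₗ[ℝ] ((Fin n₂ → ℝ) →ₗ[ℝ] (Fin n₁ → ℝ)) :=
    (LinearEquiv.curry ℝ ℝ (Fin n₁) (Fin n₂)).trans Matrix.toLin' with he₁
  set eA : (Fin m₁ × Fin m₂ → ℝ) ≃ₗ[ℝ] ((Fin m₂ → ℝ) →ₗ[ℝ] (Fin m₁ → ℝ)) :=
    (LinearEquiv.curry ℝ ℝ (Fin m₁) (Fin m₂)).trans Matrix.toLin' with heA
  set eB : (Fin p × Fin n₂ → ℝ) ≃ₗ[ℝ] ((Fin n₂ → ℝ) →ₗ[ℝ] (Fin p → ℝ)) :=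
    (LinearEquiv.curry ℝ ℝ (Fin p) (Fin n₂)).trans Matrix.toLin' with heB
  set e₂ := (LinearEquiv.sumArrowLequivProdArrow (Fin m₁ × Fin m₂) (Fin p × Fin n₂) ℝ ℝ).trans
    (eA.prodCongr eB) with he₂
  -- the stacked matrix corresponds to Φ
  have hS : (Matrix.fromRows (A₁ ⊗ₖ A₂) (B ⊗ₖ (1 : Matrix (Fin n₂) (Fin n₂) ℝ))).rank
      = finrank ℝ (LinearMap.range Φ) := by
    refine finrank_range_conj _ Φ e₁ e₂ ?_
    intro x
    set X : Matrix (Fin n₁) (Fin n₂) ℝ := Matrix.of (fun k k' => x (k, k')) with hX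
    have hx : e₁ x = Matrix.toLin' X := rfl
    refine Prod.ext ?_ ?_
    · show a ∘ₗ ((e₁ x) ∘ₗ c) = _
      have hM : (Matrix.of fun i i' =>
          ((Matrix.fromRows (A₁ ⊗ₖ A₂) (B ⊗ₖ (1 : Matrix (Fin n₂) (Fin n₂) ℝ))).mulVecLin x)
            (Sum.inl (i, i'))) = A₁ * X * A₂ᵀ := by
        ext i i'
        simp only [Matrix.of_apply, Matrix.mulVecLin_apply, Matrix.fromRows_mulVec,
          Sum.elim_inl]
        exact kron_mulVec_entry A₁ A₂ x i i'
      show _ = eA _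
      rw [show eA ((Matrix.fromRows (A₁ ⊗ₖ A₂)
            (B ⊗ₖ (1 : Matrix (Fin n₂) (Fin n₂) ℝ))).mulVecLin x ∘ Sum.inl)
          = Matrix.toLin' (A₁ * X * A₂ᵀ) from congrArg Matrix.toLin' hM]
      rw [hx]
      ext w
      simp [ha, hc, Matrix.mulVecLin_apply, Matrix.toLin'_apply, Matrix.mulVec_mulVec,
        Matrix.mul_assoc]
    · show b ∘ₗ (e₁ x) = _
      have hM : (Matrix.of fun i j =>
          ((Matrix.fromRows (A₁ ⊗ₖ A₂) (B ⊗ₖ (1 : Matrix (Fin n₂) (Fin n₂) ℝ))).mulVecLin x)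
            (Sum.inr (i, j))) = B * X := by
        ext i j
        simp only [Matrix.of_apply, Matrix.mulVecLin_apply, Matrix.fromRows_mulVec,
          Sum.elim_inr]
        exact kronOne_mulVec_entry B x i j
      show _ = eB _
      rw [show eB ((Matrix.fromRows (A₁ ⊗ₖ A₂)
            (B ⊗ₖ (1 : Matrix (Fin n₂) (Fin n₂) ℝ))).mulVecLin x ∘ Sum.inr)
          = Matrix.toLin' (B * X) from congrArg Matrix.toLin' hM]
      rw [hx]
      ext w
      simp [hb, Matrix.mulVecLin_apply, Matrix.toLin'_apply, Matrix.mulVec_mulVec]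
  -- fromRows A₁ B corresponds to a.prod b
  have hAB : (Matrix.fromRows A₁ B).rank = finrank ℝ (LinearMap.range (a.prod b)) := by
    refine (finrank_range_conj (a.prod b) _ (LinearEquiv.refl ℝ _)
      (LinearEquiv.sumArrowLequivProdArrow (Fin m₁) (Fin p) ℝ ℝ).symm ?_).symm
    intro x
    apply (LinearEquiv.sumArrowLequivProdArrow (Fin m₁) (Fin p) ℝ ℝ).injective
    simp only [LinearEquiv.apply_symm_apply, LinearEquiv.refl_apply]
    refine Prod.ext ?_ ?_ <;>
      · ext i
        simp [LinearEquiv.sumArrowLequivProdArrow, ha, hb, Matrix.mulVecLin_apply,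
          Matrix.fromRows_mulVec]
  -- rank and kernel bookkeeping
  have hrB : B.rank = finrank ℝ (LinearMap.range b) := rfl
  have hrA₂ : A₂.rank = finrank ℝ (LinearMap.range c) := by
    rw [← Matrix.rank_transpose A₂]; rfl
  have hker : LinearMap.ker (a.prod b) = LinearMap.ker a ⊓ LinearMap.ker b :=
    LinearMap.ker_prod a b
  have hn : finrank ℝ (Fin n₁ → ℝ) = n₁ := by simp
  have hn₂ : finrank ℝ (Fin n₂ → ℝ) = n₂ := by simp
  have F2 : finrank ℝ (LinearMap.range (a.prod b))
      + finrank ℝ ↥(LinearMap.ker a ⊓ LinearMap.ker b) = n₁ := by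
    have h := LinearMap.finrank_range_add_finrank_ker (a.prod b)
    rwa [hker, hn] at h
  have F3 : finrank ℝ (LinearMap.range b) + finrank ℝ (LinearMap.ker b) = n₁ := by
    have h := LinearMap.finrank_range_add_finrank_ker b
    rwa [hn] at h
  have F4 : finrank ℝ ↥(LinearMap.ker a ⊓ LinearMap.ker b) ≤ finrank ℝ (LinearMap.ker b) :=
    Submodule.finrank_mono inf_le_right
  have F1 := core_rank a b c
  rw [hn, hn₂] at F1
  rw [hS, hAB, hrB, hrA₂]
  set rΦ := finrank ℝ (LinearMap.range Φ)
  set rc := finrank ℝ (LinearMap.range c)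
  set rb := finrank ℝ (LinearMap.range b)
  set rab := finrank ℝ (LinearMap.range (a.prod b))
  set kb := finrank ℝ (LinearMap.ker b)
  set kab := finrank ℝ ↥(LinearMap.ker a ⊓ LinearMap.ker b)
  have h5 : rab - rb = kb - kab := by omega
  rw [h5]
  have h6 : n₂ * n₁ = n₂ * rb + n₂ * kb := by rw [← F3, Nat.mul_add]
  linarith [F1, h6]
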